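/- Let a ≥ 2 be a natural number and d ∈ (0,1). Let (V, δ, 𝔰) be a deterministic partial automaton over Fin a such that: (i) every state reachable from 𝔰 has out-degree at least 1; and (ii) there exist K ∈ ℕ and a real λ > a^(−d) such that every word w accepted from 𝔰 with w.length ≥ K ends at a state of out-degree at least λ·a. For each L ∈ ℕ let μ_L be the law of a random set of relators at density d and length L (the product over Fin N_L, N_L = ⌈a^(d·L)⌉, of the uniform probability measure on Fin L → Fin a). Then the probability that at least one sampled relator is an accepted word of the automaton tends to 1 as L → ∞; formally, Tendsto (fun L => μ_L {ω | ∃ i, List.ofFn (ω i) is accepted from 𝔰}) atTop (nhds 1). -/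

import Mathlib

open MeasureTheory ENNReal

/-- The run map of a deterministic partial automaton. -/
def reach {V α : Type*} (δ : V → α → Option V) : V → List α → Option V
  | v, [] => some v
  | v, x :: w => (δ v x).bind fun u => reach δ u w

/-- The out-degree of a state `v`: the number of letters on which a transition
from `v` is defined. -/
noncomputable def outDeg {V α : Type*} [Fintype α] (δ : V → α → Option V) (v : V) : ℕ :=
  open Classical in (Finset.univ.filter fun x : α => δ v x ≠ none).card

/-- The uniform probability measure on words of length `L` over `Fin a`
(words identified with functions `Fin L → Fin a`). -/
noncomputable def uniformWords (a L : ℕ) : Measure (Fin L → Fin a) :=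
  ((Fintype.card (Fin L → Fin a) : ℝ≥0∞))⁻¹ • Measure.count

/-- The law of a random set of relators at density `d` and length `L` over `Fin a`:
`N_L = ⌈a^(d·L)⌉` independent uniformly random words of length `L`. -/
noncomputable def relatorLaw (a : ℕ) (d : ℝ) (L : ℕ) :
    Measure (Fin ⌈(a : ℝ) ^ (d * (L : ℝ))⌉₊ → (Fin L → Fin a)) :=
  Measure.pi fun _ => uniformWords a L

section Comb

open Classical

variable {V α : Type*} [Fintype α] (δ : V → α → Option V) (𝔰 : V)

theorem reach_append (v : V) (u w : List α) :
    reach δ v (u ++ w) = (reach δ v u).bind fun t => reach δ t w := by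
  induction u generalizing v with
  | nil => simp [reach]
  | cons x u ih =>
    simp only [List.cons_append, reach]
    cases δ v x with
    | none => simp
    | some t => simp [ih]

/-- accepted words of length n -/
noncomputable def acc (n : ℕ) : Finset (Fin n → α) :=
  Finset.univ.filter fun w => reach δ 𝔰 (List.ofFn w) ≠ none

theorem mem_acc {n : ℕ} (w : Fin n → α) :
    w ∈ acc δ 𝔰 n ↔ reach δ 𝔰 (List.ofFn w) ≠ none := by
  simp [acc]

theorem ofFn_snoc {n : ℕ} (w : Fin n → α) (x : α) :
    List.ofFn (Fin.snoc w x) = List.ofFn w ++ [x] := by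
  rw [List.ofFn_succ']
  simp [Fin.snoc, List.concat_eq_append]

theorem acc_card_pos (hreach : ∀ (w : List α) (t : V), reach δ 𝔰 w = some t → 1 ≤ outDeg δ t)
    (n : ℕ) : 1 ≤ (acc δ 𝔰 n).card := by
  induction n with
  | zero =>
    refine Finset.card_pos.mpr ⟨fun i => i.elim0, ?_⟩
    simp [mem_acc, List.ofFn_zero, reach]
  | succ n ih =>
    obtain ⟨w, hw⟩ := Finset.card_pos.mp ih
    rw [mem_acc] at hw
    obtain ⟨t, ht⟩ := Option.ne_none_iff_exists'.mp hw
    have h1 := hreach _ _ ht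
    rw [outDeg, Finset.one_le_card] at h1
    obtain ⟨x, hx⟩ := h1
    rw [Finset.mem_filter] at hx
    refine Finset.card_pos.mpr ⟨Fin.snoc w x, ?_⟩
    rw [mem_acc, ofFn_snoc, reach_append, ht]
    simpa [reach] using hx.2

theorem prefix_acc {n : ℕ} (w : Fin (n+1) → α) (hw : w ∈ acc δ 𝔰 (n+1)) :
    (w ∘ Fin.castSucc) ∈ acc δ 𝔰 n := by
  rw [mem_acc] at hw ⊢
  intro hcon
  apply hw
  rw [List.ofFn_succ' w, List.concat_eq_append, reach_append]
  have he : (List.ofFn fun i : Fin n => w i.castSucc) = List.ofFn (w ∘ Fin.castSucc) := rfl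
  rw [he, hcon]
  rfl

theorem acc_card_mul {K : ℕ} {lam : ℝ}
    (hlam : ∀ (w : List α) (t : V), K ≤ w.length → reach δ 𝔰 w = some t →
      lam * (Fintype.card α : ℝ) ≤ (outDeg δ t : ℝ))
    (n : ℕ) (hn : K ≤ n) :
    ⌈lam * (Fintype.card α : ℝ)⌉₊ * (acc δ 𝔰 n).card ≤ (acc δ 𝔰 (n + 1)).card := by
  classical
  set m := ⌈lam * (Fintype.card α : ℝ)⌉₊ with hm
  have hmaps : ∀ w ∈ acc δ 𝔰 (n+1), (w ∘ Fin.castSucc) ∈ acc δ 𝔰 n :=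
    fun w hw => prefix_acc δ 𝔰 w hw
  rw [Finset.card_eq_sum_card_fiberwise hmaps]
  have key : ∀ w ∈ acc δ 𝔰 n,
      m ≤ ((acc δ 𝔰 (n+1)).filter fun v => v ∘ Fin.castSucc = w).card := by
    intro w hw
    rw [mem_acc] at hw
    obtain ⟨t, ht⟩ := Option.ne_none_iff_exists'.mp hw
    have hdeg : lam * (Fintype.card α : ℝ) ≤ (outDeg δ t : ℝ) :=
      hlam _ _ (by simpa using hn) ht
    have hm_le : m ≤ outDeg δ t := Nat.ceil_le.mpr hdeg
    refine hm_le.trans ?_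
    rw [outDeg]
    refine Finset.card_le_card_of_injOn (fun x : α => (Fin.snoc w x : Fin (n+1) → α)) ?_ ?_
    · intro x hx
      rw [Finset.mem_coe, Finset.mem_filter] at hx
      rw [Finset.mem_coe, Finset.mem_filter]
      constructor
      · rw [mem_acc, ofFn_snoc, reach_append, ht]
        simpa [reach] using hx.2
      · funext i
        simp [Fin.snoc_castSucc]
    · intro x _ y _ hxy
      have := congrFun hxy (Fin.last n)
      simpa [Fin.snoc_last] using this
  calc m * (acc δ 𝔰 n).card = (acc δ 𝔰 n).card • m := by rw [smul_eq_mul, mul_comm]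
    _ ≤ _ := Finset.card_nsmul_le_sum _ _ _ key

theorem acc_card_ge {K : ℕ} {lam : ℝ}
    (hreach : ∀ (w : List α) (t : V), reach δ 𝔰 w = some t → 1 ≤ outDeg δ t)
    (hlam : ∀ (w : List α) (t : V), K ≤ w.length → reach δ 𝔰 w = some t →
      lam * (Fintype.card α : ℝ) ≤ (outDeg δ t : ℝ))
    (L : ℕ) (hL : K ≤ L) :
    ⌈lam * (Fintype.card α : ℝ)⌉₊ ^ (L - K) ≤ (acc δ 𝔰 L).card := by
  induction L, hL using Nat.le_induction with
  | base => simpa using acc_card_pos δ 𝔰 hreach K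
  | succ n hn ih =>
    have h1 := acc_card_mul δ 𝔰 hlam n hn
    have : n + 1 - K = (n - K) + 1 := by omega
    rw [this, pow_succ, mul_comm]
    exact le_trans (Nat.mul_le_mul_left _ ih) h1

end Comb

theorem uniformWords_apply (a L : ℕ) (S : Set (Fin L → Fin a)) :
    uniformWords a L S = (S.toFinite.toFinset.card : ℝ≥0∞) / ((a : ℝ≥0∞) ^ L) := by
  rw [uniformWords, Measure.smul_apply, Measure.count_apply_finite _ S.toFinite,
    smul_eq_mul, div_eq_mul_inv, mul_comm]
  norm_num [Fintype.card_fun]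

instance uniformWords_prob (a L : ℕ) [NeZero a] : IsProbabilityMeasure (uniformWords a L) := by
  constructor
  rw [uniformWords_apply]
  have h0 : ((a : ℝ≥0∞) ^ L) ≠ 0 :=
    pow_ne_zero _ (by exact_mod_cast (NeZero.ne a))
  have htop : ((a : ℝ≥0∞) ^ L) ≠ ⊤ := pow_ne_top (natCast_ne_top a)
  rw [ENNReal.div_eq_one_iff h0 htop]
  simp [Set.Finite.toFinset_univ, Fintype.card_fun]

theorem relatorLaw_compl (a : ℕ) [NeZero a] (d : ℝ) (L : ℕ) (B : Set (Fin L → Fin a)) :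
    relatorLaw a d L {ω | ∀ i, ω i ∈ B} = (uniformWords a L B) ^ ⌈(a : ℝ) ^ (d * (L : ℝ))⌉₊ := by
  have : {ω : Fin ⌈(a : ℝ) ^ (d * (L : ℝ))⌉₊ → (Fin L → Fin a) | ∀ i, ω i ∈ B}
      = Set.pi Set.univ (fun _ => B) := by ext; simp
  rw [relatorLaw, this, Measure.pi_pi]
  simp [Finset.prod_const]

/-- for an automaton over `Fin a` (with `a ≥ 2`) in which every
reachable state has out-degree `≥ 1`, and which for some `K` and `λ > a^(−d)` has
all states reached by accepted words of length `≥ K` of out-degree `≥ λ·a`, the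
probability that a random set of relators at density `d` and length `L` contains
an accepted word tends to `1` as `L → ∞`. -/
theorem stmt11 (a : ℕ) (ha : 2 ≤ a) (d : ℝ) (hd : d ∈ Set.Ioo (0 : ℝ) 1)
    {V : Type*} (δ : V → Fin a → Option V) (𝔰 : V)
    (hreach : ∀ (w : List (Fin a)) (t : V), reach δ 𝔰 w = some t → 1 ≤ outDeg δ t)
    (hlarge : ∃ K : ℕ, ∃ lam : ℝ, (a : ℝ) ^ (-d) < lam ∧
      ∀ (w : List (Fin a)) (t : V), K ≤ w.length → reach δ 𝔰 w = some t →
        lam * a ≤ (outDeg δ t : ℝ)) :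
    Filter.Tendsto
      (fun L : ℕ => relatorLaw a d L {ω | ∃ i, reach δ 𝔰 (List.ofFn (ω i)) ≠ none})
      Filter.atTop (nhds 1) := by
  classical
  obtain ⟨K, lam, hlt, hlam⟩ := hlarge
  haveI : NeZero a := ⟨by omega⟩
  have ha0 : (0:ℝ) < a := by positivity
  have hlam0 : 0 < lam := lt_trans (Real.rpow_pos_of_pos ha0 _) hlt
  have hlam' : ∀ (w : List (Fin a)) (t : V), K ≤ w.length → reach δ 𝔰 w = some t →
      lam * (Fintype.card (Fin a) : ℝ) ≤ (outDeg δ t : ℝ) := by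
    simpa [Fintype.card_fin] using hlam
  set N : ℕ → ℕ := fun L => ⌈(a : ℝ) ^ (d * (L : ℝ))⌉₊ with hN
  -- real acceptance probability
  set p : ℕ → ℝ := fun L => ((acc δ 𝔰 L).card : ℝ) / (a : ℝ) ^ L with hp
  have hp_nonneg : ∀ L, 0 ≤ p L := fun L => by positivity
  have hcard_le : ∀ L : ℕ, (acc δ 𝔰 L).card ≤ a ^ L := fun L => by
    calc (acc δ 𝔰 L).card ≤ Fintype.card (Fin L → Fin a) := Finset.card_le_univ _
      _ = a ^ L := by simp [Fintype.card_fun]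
  have hp_le_one : ∀ L, p L ≤ 1 := by
    intro L
    rw [hp, div_le_one (by positivity)]
    exact_mod_cast hcard_le L
  -- measure of acceptance set
  have hacc_meas : ∀ (L : ℕ) (S : Set (Fin L → Fin a)), MeasurableSet S := fun L S =>
    S.to_countable.measurableSet
  have hpi_meas : ∀ (L : ℕ) (S : Set (Fin (N L) → (Fin L → Fin a))), MeasurableSet S :=
    fun L S => S.to_countable.measurableSet
  have hup : ∀ L : ℕ, uniformWords a L {w | reach δ 𝔰 (List.ofFn w) ≠ none}
      = ENNReal.ofReal (p L) := by
    intro L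
    rw [uniformWords_apply]
    have hfin : (({w : Fin L → Fin a | reach δ 𝔰 (List.ofFn w) ≠ none}).toFinite.toFinset)
        = acc δ 𝔰 L := by
      ext w; simp [acc, Set.Finite.mem_toFinset]
    rw [hfin, hp, ENNReal.ofReal_div_of_pos (by positivity)]
    norm_cast
  -- the complement computation
  have hmain : ∀ L : ℕ, relatorLaw a d L {ω | ∃ i, reach δ 𝔰 (List.ofFn (ω i)) ≠ none}
      = 1 - (1 - ENNReal.ofReal (p L)) ^ (N L) := by
    intro L
    have hE : {ω : Fin (N L) → (Fin L → Fin a) | ∃ i, reach δ 𝔰 (List.ofFn (ω i)) ≠ none}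
        = {ω | ∀ i, ω i ∈ {w : Fin L → Fin a | reach δ 𝔰 (List.ofFn w) = none}}ᶜ := by
      ext ω; simp
    haveI : IsProbabilityMeasure (relatorLaw a d L) := by
      rw [relatorLaw]; infer_instance
    rw [hE, prob_compl_eq_one_sub (hpi_meas L _), relatorLaw_compl]
    have hB : uniformWords a L {w : Fin L → Fin a | reach δ 𝔰 (List.ofFn w) = none}
        = 1 - ENNReal.ofReal (p L) := by
      have hc : {w : Fin L → Fin a | reach δ 𝔰 (List.ofFn w) = none}
          = {w | reach δ 𝔰 (List.ofFn w) ≠ none}ᶜ := by ext w; simp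
      rw [hc, prob_compl_eq_one_sub (hacc_meas L _), hup]
    rw [hB]
  simp only [hmain]
  -- key growth: N L * p L → ∞
  set t : ℝ := (a:ℝ) ^ d * lam with hT
  have ht1 : 1 < t := by
    have := (mul_lt_mul_iff_right₀ (Real.rpow_pos_of_pos ha0 d)).mpr hlt
    rwa [← Real.rpow_add ha0, add_neg_cancel, Real.rpow_zero] at this
  set C : ℝ := ((lam * a) ^ K)⁻¹ with hC
  have hla : 0 < lam * a := by positivity
  have hC0 : 0 < C := by positivity
  have hgrow : ∀ L : ℕ, K ≤ L → C * t ^ L ≤ (N L : ℝ) * p L := by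
    intro L hL
    have hcard : ((lam * a) ^ (L - K) : ℝ) ≤ ((acc δ 𝔰 L).card : ℝ) := by
      have h1 := acc_card_ge δ 𝔰 hreach hlam' L hL
      have h2 : (lam * (a:ℝ)) ^ (L - K) ≤ ((⌈lam * (Fintype.card (Fin a) : ℝ)⌉₊ : ℝ)) ^ (L-K) := by
        apply pow_le_pow_left₀ hla.le
        simpa [Fintype.card_fin] using Nat.le_ceil (lam * (a:ℝ))
      calc (lam * (a:ℝ)) ^ (L - K) ≤ _ := h2
        _ ≤ _ := by exact_mod_cast Nat.cast_le.mpr h1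
    have hNge : ((a:ℝ) ^ (d * (L:ℝ))) ≤ (N L : ℝ) := Nat.le_ceil _
    have hp_ge : (lam * a) ^ (L - K) / (a:ℝ) ^ L ≤ p L := by
      apply div_le_div_of_nonneg_right hcard (by positivity) |>.trans_eq rfl
    have key : C * t ^ L = (a:ℝ) ^ (d * (L:ℝ)) * ((lam * a) ^ (L - K) / (a:ℝ) ^ L) := by
      rw [hC, hT]
      have hsub : (lam * (a:ℝ)) ^ (L - K) = (lam * a) ^ L / (lam * a) ^ K :=
        pow_sub₀ _ (ne_of_gt hla) hL
      rw [hsub]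
      have hrp : (a:ℝ) ^ (d * (L:ℝ)) = ((a:ℝ) ^ d) ^ L := by
        rw [← Real.rpow_natCast ((a:ℝ)^d) L, ← Real.rpow_mul ha0.le]
      rw [hrp, mul_pow, mul_pow]
      field_simp
      ring
    rw [key]
    calc (a:ℝ) ^ (d * (L:ℝ)) * ((lam * a) ^ (L - K) / (a:ℝ) ^ L)
        ≤ (N L : ℝ) * ((lam * a) ^ (L - K) / (a:ℝ) ^ L) := by
          apply mul_le_mul_of_nonneg_right hNge (by positivity)
      _ ≤ (N L : ℝ) * p L := by
          apply mul_le_mul_of_nonneg_left hp_ge (by positivity)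
  have hNp : Filter.Tendsto (fun L => (N L : ℝ) * p L) Filter.atTop Filter.atTop := by
    apply Filter.tendsto_atTop_mono' _ _
      ((tendsto_pow_atTop_atTop_of_one_lt ht1).const_mul_atTop hC0)
    filter_upwards [Filter.eventually_ge_atTop K] with L hL
    exact hgrow L hL
  -- exp bound
  have hexp : Filter.Tendsto (fun L => Real.exp (-((N L : ℝ) * p L))) Filter.atTop (nhds 0) :=
    Real.tendsto_exp_neg_atTop_nhds_zero.comp hNp
  -- bound (1 - ofReal p)^N ≤ ofReal (exp (-(N p)))
  have hqbound : ∀ L : ℕ, (1 - ENNReal.ofReal (p L)) ^ (N L)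
      ≤ ENNReal.ofReal (Real.exp (-((N L : ℝ) * p L))) := by
    intro L
    have h1 : (1 : ℝ≥0∞) - ENNReal.ofReal (p L) ≤ ENNReal.ofReal (Real.exp (-(p L))) := by
      rw [← ENNReal.ofReal_one, ← ENNReal.ofReal_sub _ (hp_nonneg L)]
      apply ENNReal.ofReal_le_ofReal
      linarith [Real.add_one_le_exp (-(p L))]
    calc (1 - ENNReal.ofReal (p L)) ^ (N L)
        ≤ ENNReal.ofReal (Real.exp (-(p L))) ^ (N L) := pow_le_pow_left' h1 _
      _ = ENNReal.ofReal (Real.exp (-(p L)) ^ (N L)) :=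
          (ENNReal.ofReal_pow (Real.exp_nonneg _) _).symm
      _ = ENNReal.ofReal (Real.exp (-((N L : ℝ) * p L))) := by
          rw [← Real.exp_nat_mul]; ring_nf
  -- squeeze in ℝ≥0∞
  have hlow : Filter.Tendsto
      (fun L => 1 - ENNReal.ofReal (Real.exp (-((N L : ℝ) * p L)))) Filter.atTop (nhds 1) := by
    have h0 : Filter.Tendsto (fun L => ENNReal.ofReal (Real.exp (-((N L : ℝ) * p L))))
        Filter.atTop (nhds 0) := by
      rw [← ENNReal.ofReal_zero]
      exact (ENNReal.continuous_ofReal.tendsto 0).comp hexp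
    have := (ENNReal.continuous_sub_left (a := 1) one_ne_top).tendsto 0 |>.comp h0
    simpa [Function.comp_def] using this
  refine tendsto_of_tendsto_of_tendsto_of_le_of_le hlow tendsto_const_nhds ?_ ?_
  · intro L
    exact tsub_le_tsub_left (hqbound L) 1
  · intro L
    exact tsub_le_self
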